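/- arXiv:2005.05797 — 2 statements merged into one kernel-verified Lean document; each statement's English description precedes it below -/
import Mathlib

section
/- Let μ be a finite nonnegative Borel measure on ℝ. Then the singular part μ_s of μ (with respect to Lebesgue measure) is carried by the set S_μ = {x ∈ ℝ : lim_{n→∞} μ(x + i 2^{-n}) = +∞}, i.e., μ_s(ℝ \ S_μ) = 0, where μ(z) denotes the Poisson extension of μ. -/
open MeasureTheory Filter

/-- The Poisson extension of a measure `μ` on `ℝ` at the point `x + iy` of the upper
half-plane. -/
noncomputable def poissonExt (μ : Measure ℝ) (x y : ℝ) : ℝ :=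
  (1 / Real.pi) * ∫ s, y / ((s - x) ^ 2 + y ^ 2) ∂μ

open Metric Set ENNReal in
lemma poissonExt_ge (μ : Measure ℝ) [IsFiniteMeasure μ] (x y : ℝ) (hy : 0 < y) :
    (1 / Real.pi) * ((1 / (2 * y)) *
      ((μ.singularPart volume) (closedBall x y)).toReal) ≤ poissonExt μ x y := by
  set ν := μ.singularPart volume
  have hle : ν ≤ μ := Measure.singularPart_le μ volume
  have hνfin : IsFiniteMeasure ν := by
    constructor
    exact lt_of_le_of_lt (hle Set.univ) (measure_lt_top μ _)
  have hpos : ∀ s : ℝ, 0 < (s - x) ^ 2 + y ^ 2 := fun s => by positivity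
  have hcont : Continuous fun s : ℝ => y / ((s - x) ^ 2 + y ^ 2) := by
    apply Continuous.div continuous_const (by fun_prop)
    intro s; exact (hpos s).ne'
  have hnonneg : ∀ s : ℝ, 0 ≤ y / ((s - x) ^ 2 + y ^ 2) := fun s =>
    div_nonneg hy.le (hpos s).le
  have hint : Integrable (fun s : ℝ => y / ((s - x) ^ 2 + y ^ 2)) μ := by
    refine ⟨hcont.aestronglyMeasurable, HasFiniteIntegral.of_bounded (C := 1 / y) ?_⟩
    filter_upwards with s
    rw [Real.norm_eq_abs, abs_of_nonneg (hnonneg s)]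
    rw [div_le_div_iff₀ (hpos s) hy]
    nlinarith [sq_nonneg (s - x)]
  have hintν : Integrable (fun s : ℝ => y / ((s - x) ^ 2 + y ^ 2)) ν :=
    hint.mono_measure hle
  have h1 : ∫ s, y / ((s - x) ^ 2 + y ^ 2) ∂ν ≤ ∫ s, y / ((s - x) ^ 2 + y ^ 2) ∂μ :=
    integral_mono_measure hle (Filter.Eventually.of_forall hnonneg) hint
  have h2 : ∫ s in closedBall x y, y / ((s - x) ^ 2 + y ^ 2) ∂ν ≤
      ∫ s, y / ((s - x) ^ 2 + y ^ 2) ∂ν :=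
    setIntegral_le_integral hintν (Filter.Eventually.of_forall hnonneg)
  have h3 : (1 / (2 * y)) * (ν (closedBall x y)).toReal ≤
      ∫ s in closedBall x y, y / ((s - x) ^ 2 + y ^ 2) ∂ν := by
    apply setIntegral_ge_of_const_le_real measurableSet_closedBall (measure_ne_top ν _)
    · intro s hs
      rw [Metric.mem_closedBall, Real.dist_eq] at hs
      rw [div_le_div_iff₀ (by positivity) (hpos s)]
      have : (s - x) ^ 2 ≤ y ^ 2 := sq_le_sq' (by linarith [abs_le.1 hs]) (abs_le.1 hs).2
      nlinarith
    · exact hintν.integrableOn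
  have hπ : 0 < 1 / Real.pi := by positivity
  unfold poissonExt
  have := (h3.trans h2).trans h1
  nlinarith

/-- The singular part (w.r.t. Lebesgue measure) of a finite Borel measure `μ` on `ℝ` is
carried by the set where the Poisson extension `μ(x + i 2⁻ⁿ)` tends to `+∞`. -/
theorem stmt6 (μ : Measure ℝ) [IsFiniteMeasure μ] :
    μ.singularPart volume
      {x : ℝ | ¬ Tendsto (fun n : ℕ => poissonExt μ x (((2 : ℝ) ^ n)⁻¹)) atTop atTop}
      = 0 := by
  set ν := μ.singularPart volume with hν
  have hνfin : IsFiniteMeasure ν := by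
    constructor
    exact lt_of_le_of_lt (Measure.singularPart_le μ volume Set.univ) (measure_lt_top μ _)
  -- volume is singular w.r.t. ν
  have hsing : (volume : Measure ℝ) ⟂ₘ ν :=
    (Measure.mutuallySingular_singularPart μ volume).symm
  have key : ∀ᵐ x ∂ν, Tendsto
      (fun r => volume (Metric.closedBall x r) / ν (Metric.closedBall x r)) (nhdsWithin 0 (Set.Ioi 0)) (nhds 0) := by
    filter_upwards [(Besicovitch.vitaliFamily ν).ae_eventually_measure_zero_of_singular hsing]
      with x hx
    exact hx.comp (Besicovitch.tendsto_filterAt ν x)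
  apply measure_mono_null (t := {x : ℝ | ¬ Tendsto
      (fun r => volume (Metric.closedBall x r) / ν (Metric.closedBall x r)) (nhdsWithin 0 (Set.Ioi 0)) (nhds 0)})
  · intro x hx
    simp only [Set.mem_setOf_eq] at hx ⊢
    intro hrat
    apply hx
    -- from the ratio tendsto 0, deduce Poisson extension blows up
    have hr : Tendsto (fun n : ℕ => ((2 : ℝ) ^ n)⁻¹) atTop (nhdsWithin 0 (Set.Ioi 0)) := by
      apply tendsto_nhdsWithin_of_tendsto_nhds_of_eventually_within
      · exact tendsto_inv_atTop_zero.comp (tendsto_pow_atTop_atTop_of_one_lt one_lt_two)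
      · filter_upwards with n
        exact Set.mem_Ioi.2 (by positivity)
    -- key quantitative step
    have hmain : Tendsto (fun n : ℕ =>
        (ν (Metric.closedBall x (((2 : ℝ) ^ n)⁻¹))).toReal * (2 : ℝ) ^ n) atTop atTop := by
      rw [tendsto_atTop]
      intro M
      rcases le_or_gt M 0 with hM | hM
      · filter_upwards with n
        exact hM.trans (by positivity)
      have hε : (0 : ENNReal) < ENNReal.ofReal (2 / M) := by
        apply ENNReal.ofReal_pos.2; positivity
      have := (hrat.comp hr).eventually_lt_const hε
      filter_upwards [this] with n hn
      simp only [Function.comp] at hn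
      set r : ℝ := ((2 : ℝ) ^ n)⁻¹ with hrdef
      have hrpos : 0 < r := by positivity
      have hvol : volume (Metric.closedBall x r) = ENNReal.ofReal (2 * r) :=
        Real.volume_closedBall x r
      have hvol0 : volume (Metric.closedBall x r) ≠ 0 := by
        rw [hvol]; simp [ENNReal.ofReal_eq_zero]; linarith
      have hvolt : volume (Metric.closedBall x r) ≠ ⊤ := by
        rw [hvol]; exact ENNReal.ofReal_ne_top
      rw [ENNReal.div_lt_iff (Or.inr hvol0) (Or.inr hvolt)] at hn
      -- volume B < ofReal (2/M) * ν B
      have hν0 : ν (Metric.closedBall x r) ≠ 0 := by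
        intro h
        rw [h, mul_zero] at hn
        exact absurd hn (by simp [pos_iff_ne_zero, hvol0])
      have hνt : ν (Metric.closedBall x r) ≠ ⊤ := measure_ne_top ν _
      -- convert to reals
      have hreal : 2 * r < (2 / M) * (ν (Metric.closedBall x r)).toReal := by
        have := ENNReal.toReal_strict_mono (by
            exact ENNReal.mul_ne_top ENNReal.ofReal_ne_top hνt) hn
        rwa [hvol, ENNReal.toReal_ofReal (by positivity),
          ENNReal.toReal_mul, ENNReal.toReal_ofReal (by positivity)] at this
      have h2 : M * r < (ν (Metric.closedBall x r)).toReal := by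
        have h := mul_lt_mul_of_pos_left hreal (half_pos hM)
        calc M * r = (M/2) * (2*r) := by ring
          _ < (M/2) * ((2/M) * (ν (Metric.closedBall x r)).toReal) := h
          _ = (ν (Metric.closedBall x r)).toReal := by field_simp
      calc M = (M * r) * (2:ℝ)^n := by rw [hrdef]; field_simp
        _ ≤ (ν (Metric.closedBall x r)).toReal * (2:ℝ)^n := by
            apply mul_le_mul_of_nonneg_right h2.le (by positivity)
    -- lower bound on poissonExt
    apply tendsto_atTop_mono' _ _ (hmain.const_mul_atTop (show (0:ℝ) < 1/(2*Real.pi) by positivity))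
    filter_upwards with n
    have hb := poissonExt_ge μ x (((2 : ℝ) ^ n)⁻¹) (by positivity)
    refine le_trans (le_of_eq ?_) hb
    have hπ : Real.pi ≠ 0 := Real.pi_ne_zero
    field_simp
    ring
  · exact ae_iff.1 key
end

section
/- Let μ and ν be finite nonnegative Borel measures on ℝ with dν = w dμ for some w ∈ L¹(μ), and let y_n = 2^{-n}. Then lim_{n→∞} ν(x + i y_n)/μ(x + i y_n) = w(x) for μ-almost every x ∈ ℝ, where μ(z), ν(z) denote Poisson extensions. -/
open MeasureTheory Filter Set Metric Topology

namespace Stmt8Aux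

variable {x y : ℝ}

lemma contK (x : ℝ) (hy : 0 < y) : Continuous fun s : ℝ => y / ((s - x) ^ 2 + y ^ 2) :=
  continuous_const.div (by fun_prop) fun s => by positivity

lemma K_pos (hy : 0 < y) (s : ℝ) : 0 < y / ((s - x) ^ 2 + y ^ 2) := by positivity

lemma K_le (hy : 0 < y) (s : ℝ) : y / ((s - x) ^ 2 + y ^ 2) ≤ 1 / y := by
  have h1 : y ^ 2 ≤ (s - x) ^ 2 + y ^ 2 := by nlinarith [sq_nonneg (s - x)]
  calc y / ((s - x) ^ 2 + y ^ 2) ≤ y / y ^ 2 :=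
        div_le_div_of_nonneg_left hy.le (by positivity) h1
    _ = 1 / y := by rw [sq]; rw [div_mul_eq_div_div, div_self hy.ne']

lemma integrableK (μ : Measure ℝ) [IsFiniteMeasure μ] (x : ℝ) (hy : 0 < y) :
    Integrable (fun s => y / ((s - x) ^ 2 + y ^ 2)) μ := by
  refine (integrable_const (1 / y)).mono' ((contK x hy).aestronglyMeasurable) ?_
  filter_upwards with s
  rw [Real.norm_eq_abs, abs_of_pos (K_pos hy s)]
  exact K_le hy s

lemma K_ball_le (hy : 0 < y) {r s : ℝ} (hs : s ∈ closedBall x r) :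
    y / (r ^ 2 + y ^ 2) ≤ y / ((s - x) ^ 2 + y ^ 2) := by
  have hd : dist s x ≤ r := hs
  rw [Real.dist_eq] at hd
  have h2 : (s - x) ^ 2 ≤ r ^ 2 := by
    have := abs_nonneg (s - x)
    calc (s - x) ^ 2 = |s - x| ^ 2 := (sq_abs _).symm
      _ ≤ r ^ 2 := by nlinarith
  exact div_le_div_of_nonneg_left hy.le (by positivity) (by nlinarith)

/-- Superlevel sets of the Poisson kernel are closed balls (or empty). -/
lemma superlevel (hy : 0 < y) {t : ℝ} (ht : 0 < t) :
    {s : ℝ | t ≤ y / ((s - x) ^ 2 + y ^ 2)} = ∅ ∨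
      ∃ r, 0 ≤ r ∧ y / (r ^ 2 + y ^ 2) = t ∧
        {s : ℝ | t ≤ y / ((s - x) ^ 2 + y ^ 2)} = closedBall x r := by
  set R : ℝ := y / t - y ^ 2 with hR
  have hmem : ∀ s : ℝ, t ≤ y / ((s - x) ^ 2 + y ^ 2) ↔ (s - x) ^ 2 ≤ R := by
    intro s
    have hQ : 0 < (s - x) ^ 2 + y ^ 2 := by positivity
    rw [le_div_iff₀ hQ, hR, le_sub_iff_add_le, ← le_div_iff₀' ht]
  by_cases hR0 : 0 ≤ R
  · right
    refine ⟨Real.sqrt R, Real.sqrt_nonneg R, ?_, ?_⟩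
    · rw [Real.sq_sqrt hR0, hR]
      rw [sub_add_cancel, div_div_eq_mul_div, mul_comm, mul_div_assoc, div_self hy.ne', mul_one]
    · ext s
      simp only [mem_setOf_eq, hmem s, Metric.mem_closedBall, Real.dist_eq]
      constructor
      · intro h
        have := Real.sqrt_le_sqrt h
        rwa [Real.sqrt_sq_eq_abs] at this
      · intro h
        calc (s - x) ^ 2 = |s - x| ^ 2 := (sq_abs _).symm
          _ ≤ Real.sqrt R ^ 2 := by
              have := abs_nonneg (s - x)
              nlinarith [Real.sqrt_nonneg R]
          _ = R := Real.sq_sqrt hR0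
  · left
    ext s
    simp only [mem_setOf_eq, mem_empty_iff_false, iff_false]
    intro h
    exact hR0 (le_trans (sq_nonneg _) ((hmem s).1 h))

lemma radius_le (hy : 0 < y) {r r₀ : ℝ} (hr : 0 ≤ r) (hr₀ : 0 ≤ r₀)
    (h : y / (r₀ ^ 2 + y ^ 2) ≤ y / (r ^ 2 + y ^ 2)) : r ≤ r₀ := by
  have h1 : (0:ℝ) < r ^ 2 + y ^ 2 := by positivity
  have h2 : (0:ℝ) < r₀ ^ 2 + y ^ 2 := by positivity
  rw [div_le_div_iff₀ h2 h1] at h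
  by_contra hc
  push_neg at hc
  have h3 : r₀ ^ 2 < r ^ 2 := by nlinarith
  nlinarith


/-- Key estimate: if `ρ` is dominated by `ε μ` on all closed balls around `x` of radius
`≤ r₀`, then the Poisson integral of `ρ` is bounded by `ε` times the one of `μ` plus a
tail term. -/
lemma lemA (μ ρ : Measure ℝ) [IsFiniteMeasure μ] [IsFiniteMeasure ρ]
    (x y r₀ ε : ℝ) (hy : 0 < y) (hr₀ : 0 < r₀)
    (H : ∀ r ∈ Icc 0 r₀, ρ (closedBall x r) ≤ ENNReal.ofReal ε * μ (closedBall x r)) :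
    ∫⁻ s, ENNReal.ofReal (y / ((s - x) ^ 2 + y ^ 2)) ∂ρ ≤
      ENNReal.ofReal ε * ∫⁻ s, ENNReal.ofReal (y / ((s - x) ^ 2 + y ^ 2)) ∂μ +
        ENNReal.ofReal (y / (r₀ ^ 2 + y ^ 2)) * ρ univ := by
  set K : ℝ → ℝ := fun s => y / ((s - x) ^ 2 + y ^ 2) with hK
  set t₀ : ℝ := y / (r₀ ^ 2 + y ^ 2) with ht₀def
  have ht₀ : 0 < t₀ := by positivity
  have hKnn : ∀ s, 0 ≤ K s := fun s => by positivity
  have hKm : Measurable K := (contK x hy).measurable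
  have lcρ : ∫⁻ s, ENNReal.ofReal (K s) ∂ρ = ∫⁻ t in Ioi 0, ρ {s | t ≤ K s} :=
    lintegral_eq_lintegral_meas_le ρ (Eventually.of_forall hKnn) hKm.aemeasurable
  have lcμ : ∫⁻ s, ENNReal.ofReal (K s) ∂μ = ∫⁻ t in Ioi 0, μ {s | t ≤ K s} :=
    lintegral_eq_lintegral_meas_le μ (Eventually.of_forall hKnn) hKm.aemeasurable
  have hμmeas : Measurable fun t : ℝ => μ {s | t ≤ K s} := by
    apply Antitone.measurable
    intro t t' htt'
    exact measure_mono fun s hs => le_trans htt' hs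
  rw [lcρ, ← Ioc_union_Ioi_eq_Ioi ht₀.le,
    lintegral_union measurableSet_Ioi Ioc_disjoint_Ioi_same]
  have h1 : ∫⁻ t in Ioc 0 t₀, ρ {s | t ≤ K s} ≤ ENNReal.ofReal t₀ * ρ univ := by
    calc ∫⁻ t in Ioc 0 t₀, ρ {s | t ≤ K s} ≤ ∫⁻ _ in Ioc 0 t₀, ρ univ :=
          lintegral_mono fun t => measure_mono (subset_univ _)
      _ = ρ univ * volume (Ioc 0 t₀) := by rw [setLIntegral_const]
      _ = ENNReal.ofReal t₀ * ρ univ := by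
          rw [Real.volume_Ioc, sub_zero, mul_comm]
  have h2 : ∫⁻ t in Ioi t₀, ρ {s | t ≤ K s} ≤
      ENNReal.ofReal ε * ∫⁻ s, ENNReal.ofReal (K s) ∂μ := by
    calc ∫⁻ t in Ioi t₀, ρ {s | t ≤ K s} ≤
        ∫⁻ t in Ioi t₀, ENNReal.ofReal ε * μ {s | t ≤ K s} := by
          refine setLIntegral_mono (measurable_const.mul hμmeas) fun t ht => ?_
          have ht' : t₀ < t := ht
          have htpos : 0 < t := lt_trans ht₀ ht'
          rcases superlevel (x := x) hy htpos with h | ⟨r, hr0, hrt, hset⟩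
          · rw [h]; simp
          · rw [hset]
            refine H r ⟨hr0, ?_⟩
            refine radius_le hy hr0 hr₀.le ?_
            rw [hrt]; exact le_of_lt ht'
      _ = ENNReal.ofReal ε * ∫⁻ t in Ioi t₀, μ {s | t ≤ K s} :=
          lintegral_const_mul _ hμmeas
      _ ≤ ENNReal.ofReal ε * ∫⁻ t in Ioi 0, μ {s | t ≤ K s} := by
          gcongr
      _ = ENNReal.ofReal ε * ∫⁻ s, ENNReal.ofReal (K s) ∂μ := by rw [lcμ]
  calc _ ≤ ENNReal.ofReal t₀ * ρ univ + ENNReal.ofReal ε * ∫⁻ s, ENNReal.ofReal (K s) ∂μ :=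
        add_le_add h1 h2
    _ = _ := by rw [add_comm]

/-- Real-integral version of `lemA`, with `ρ = g·μ`. -/
lemma lemB (μ : Measure ℝ) [IsFiniteMeasure μ] (g : ℝ → ℝ) (hg : Integrable g μ)
    (hgnn : 0 ≤ᵐ[μ] g) (x y r₀ ε : ℝ) (hy : 0 < y) (hr₀ : 0 < r₀) (hε : 0 ≤ ε)
    (H : ∀ r ∈ Ioc (0:ℝ) r₀,
      ∫ s in closedBall x r, g s ∂μ ≤ ε * (μ (closedBall x r)).toReal) :
    ∫ s, g s * (y / ((s - x) ^ 2 + y ^ 2)) ∂μ ≤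
      ε * ∫ s, y / ((s - x) ^ 2 + y ^ 2) ∂μ + (y / (r₀ ^ 2 + y ^ 2)) * ∫ s, g s ∂μ := by
  set K : ℝ → ℝ := fun s => y / ((s - x) ^ 2 + y ^ 2) with hKdef
  have hKm : Measurable K := (contK x hy).measurable
  have hKnn : ∀ s, 0 ≤ K s := fun s => (K_pos (x := x) hy s).le
  set ρ : Measure ℝ := μ.withDensity (fun s => ENNReal.ofReal (g s)) with hρdef
  -- ρ is a finite measure
  have hgint : ∫⁻ s, ENNReal.ofReal (g s) ∂μ = ENNReal.ofReal (∫ s, g s ∂μ) :=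
    (ofReal_integral_eq_lintegral_ofReal hg hgnn).symm
  haveI : IsFiniteMeasure ρ := by
    refine isFiniteMeasure_withDensity ?_
    rw [hgint]; exact ENNReal.ofReal_ne_top
  -- ball estimates for ρ, in ℝ≥0∞, for radii in [0, r₀]
  have Hball : ∀ r ∈ Ioc (0:ℝ) r₀,
      ρ (closedBall x r) ≤ ENNReal.ofReal ε * μ (closedBall x r) := by
    intro r hr
    have hbm : MeasurableSet (closedBall x r) := measurableSet_closedBall
    have : ρ (closedBall x r) = ENNReal.ofReal (∫ s in closedBall x r, g s ∂μ) := by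
      rw [hρdef, withDensity_apply _ hbm,
        ← ofReal_integral_eq_lintegral_ofReal hg.restrict (ae_restrict_of_ae hgnn)]
    rw [this]
    calc ENNReal.ofReal (∫ s in closedBall x r, g s ∂μ) ≤
        ENNReal.ofReal (ε * (μ (closedBall x r)).toReal) :=
          ENNReal.ofReal_le_ofReal (H r hr)
      _ = ENNReal.ofReal ε * ENNReal.ofReal ((μ (closedBall x r)).toReal) :=
          ENNReal.ofReal_mul hε
      _ = ENNReal.ofReal ε * μ (closedBall x r) := by
          rw [ENNReal.ofReal_toReal (measure_ne_top μ _)]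
  have H0 : ρ {x} ≤ ENNReal.ofReal ε * μ {x} := by
    set B : ℕ → Set ℝ := fun n => closedBall x (r₀ / (n + 1)) with hB
    have hBpos : ∀ n : ℕ, (0:ℝ) < r₀ / (n + 1) := fun n => by positivity
    have hanti : Antitone B := by
      intro m n hmn
      apply closedBall_subset_closedBall
      apply div_le_div_of_nonneg_left hr₀.le (by positivity)
      have := (Nat.cast_le (α := ℝ)).2 hmn; linarith
    have hlim : Tendsto (fun n : ℕ => r₀ / (n + 1 : ℝ)) atTop (𝓝 0) := by
      apply Tendsto.div_atTop tendsto_const_nhds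
      exact tendsto_atTop_add_const_right _ _ tendsto_natCast_atTop_atTop
    have hiInter : ⋂ n, B n = {x} := by
      ext s
      simp only [mem_iInter, hB, Metric.mem_closedBall, mem_singleton_iff]
      constructor
      · intro h
        have h0 : dist s x ≤ 0 := ge_of_tendsto hlim (Eventually.of_forall h)
        exact (@dist_le_zero ℝ _ s x).1 h0
      · intro h; subst h; intro n; simpa [dist_self] using (hBpos n).le
    have hμlim : Tendsto (fun n => μ (B n)) atTop (𝓝 (μ {x})) := by
      rw [← hiInter]
      exact tendsto_measure_iInter_atTop
        (fun n => measurableSet_closedBall.nullMeasurableSet) hanti ⟨0, measure_ne_top μ _⟩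
    have hmul : Tendsto (fun n => ENNReal.ofReal ε * μ (B n)) atTop
        (𝓝 (ENNReal.ofReal ε * μ {x})) :=
      ENNReal.Tendsto.const_mul hμlim (Or.inr ENNReal.ofReal_ne_top)
    refine ge_of_tendsto hmul (Eventually.of_forall fun n => ?_)
    calc ρ {x} ≤ ρ (B n) := measure_mono (by
          intro s hs; rw [mem_singleton_iff] at hs; subst hs
          exact mem_closedBall_self (hBpos n).le)
      _ ≤ ENNReal.ofReal ε * μ (B n) := Hball _ ⟨hBpos n, by
          rw [div_le_iff₀ (by positivity : (0:ℝ) < (n:ℝ) + 1)]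
          nlinarith [Nat.cast_nonneg (α := ℝ) n]⟩
  have Hfull : ∀ r ∈ Icc (0:ℝ) r₀,
      ρ (closedBall x r) ≤ ENNReal.ofReal ε * μ (closedBall x r) := by
    intro r hr
    rcases eq_or_lt_of_le hr.1 with h0 | h0
    · rw [← h0]; simpa [Metric.closedBall_zero] using H0
    · exact Hball r ⟨h0, hr.2⟩
  -- apply lemA and translate back to real integrals
  have key := lemA μ ρ x y r₀ ε hy hr₀ Hfull
  -- translate each lintegral
  have hintgK : Integrable (fun s => g s * K s) μ := by
    have := hg.bdd_mul (c := 1 / y) hKm.aestronglyMeasurable (Eventually.of_forall fun s => by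
      rw [Real.norm_eq_abs, abs_of_nonneg (hKnn s)]; exact K_le hy s)
    exact this.congr (Eventually.of_forall fun s => mul_comm _ _)
  have hgKnn : 0 ≤ᵐ[μ] fun s => g s * K s := by
    filter_upwards [hgnn] with s hs using mul_nonneg hs (hKnn s)
  have e1 : ∫⁻ s, ENNReal.ofReal (K s) ∂ρ = ENNReal.ofReal (∫ s, g s * K s ∂μ) := by
    rw [hρdef, lintegral_withDensity_eq_lintegral_mul₀ hg.aemeasurable.ennreal_ofReal
      (hKm.ennreal_ofReal.aemeasurable)]
    rw [ofReal_integral_eq_lintegral_ofReal hintgK hgKnn]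
    refine lintegral_congr_ae ?_
    filter_upwards [hgnn] with s hs
    simp only [Pi.mul_apply]
    rw [← ENNReal.ofReal_mul hs]
  have e2 : ∫⁻ s, ENNReal.ofReal (K s) ∂μ = ENNReal.ofReal (∫ s, K s ∂μ) :=
    (ofReal_integral_eq_lintegral_ofReal (integrableK μ x hy)
      (Eventually.of_forall hKnn)).symm
  have e3 : ρ univ = ENNReal.ofReal (∫ s, g s ∂μ) := by
    rw [hρdef, withDensity_apply _ MeasurableSet.univ, Measure.restrict_univ, hgint]
  rw [e1, e2, e3] at key
  have hDnn : 0 ≤ ∫ s, K s ∂μ := integral_nonneg fun s => hKnn s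
  have hCnn : 0 ≤ ∫ s, g s ∂μ := integral_nonneg_of_ae hgnn
  have ht₀nn : (0:ℝ) ≤ y / (r₀ ^ 2 + y ^ 2) := by positivity
  rw [← ENNReal.ofReal_mul hε, ← ENNReal.ofReal_mul ht₀nn,
    ← ENNReal.ofReal_add (by positivity) (by positivity)] at key
  exact (ENNReal.ofReal_le_ofReal_iff (by positivity)).1 key

/-- Lower bound for the denominator. -/
lemma lowden (μ : Measure ℝ) [IsFiniteMeasure μ] (x : ℝ) {y r₁ : ℝ} (hy : 0 < y)
    (hr₁ : 0 ≤ r₁) :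
    (μ (closedBall x r₁)).toReal * (y / (r₁ ^ 2 + y ^ 2)) ≤
      ∫ s, y / ((s - x) ^ 2 + y ^ 2) ∂μ := by
  have h1 : ∫ s in closedBall x r₁, (y / (r₁ ^ 2 + y ^ 2)) ∂μ ≤
      ∫ s in closedBall x r₁, y / ((s - x) ^ 2 + y ^ 2) ∂μ := by
    refine setIntegral_mono_on (integrableOn_const (measure_ne_top _ _))
      ((integrableK μ x hy).integrableOn) measurableSet_closedBall ?_
    intro s hs
    exact K_ball_le hy hs
  have h2 : ∫ s in closedBall x r₁, y / ((s - x) ^ 2 + y ^ 2) ∂μ ≤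
      ∫ s, y / ((s - x) ^ 2 + y ^ 2) ∂μ :=
    setIntegral_le_integral (integrableK μ x hy)
      (Eventually.of_forall fun s => (K_pos hy s).le)
  calc (μ (closedBall x r₁)).toReal * (y / (r₁ ^ 2 + y ^ 2))
      = ∫ _ in closedBall x r₁, (y / (r₁ ^ 2 + y ^ 2)) ∂μ := by
        rw [setIntegral_const, smul_eq_mul, measureReal_def]
    _ ≤ _ := le_trans h1 h2

/-- Poisson extension of the measure with density `w`. -/
lemma nuval (μ : Measure ℝ) (w : ℝ → ℝ) (hw_int : Integrable w μ)
    (hw_nonneg : 0 ≤ᵐ[μ] w) (x y : ℝ) :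
    ∫ s, y / ((s - x) ^ 2 + y ^ 2)
        ∂(μ.withDensity (fun s => ENNReal.ofReal (w s))) =
      ∫ s, w s * (y / ((s - x) ^ 2 + y ^ 2)) ∂μ := by
  have hmeas : AEMeasurable (fun s => (w s).toNNReal) μ :=
    measurable_real_toNNReal.comp_aemeasurable hw_int.aemeasurable
  have : μ.withDensity (fun s => ENNReal.ofReal (w s)) =
      μ.withDensity (fun s => ((w s).toNNReal : ENNReal)) := rfl
  rw [this, integral_withDensity_eq_integral_smul₀ hmeas]
  refine integral_congr_ae ?_
  filter_upwards [hw_nonneg] with s hs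
  rw [NNReal.smul_def, smul_eq_mul, Real.coe_toNNReal _ hs]

end Stmt8Aux

set_option maxHeartbeats 1000000 in
open Stmt8Aux Topology Metric Set in
/-- If `dν = w dμ` with `w ∈ L¹(μ)`, then the ratio of the Poisson extensions of `ν`
and `μ` along the points `x + i 2⁻ⁿ` converges to `w(x)` for `μ`-a.e. `x`. -/
theorem stmt8 (μ ν : Measure ℝ) [IsFiniteMeasure μ] [IsFiniteMeasure ν]
    (w : ℝ → ℝ) (hw_int : Integrable w μ) (hw_nonneg : 0 ≤ᵐ[μ] w)
    (hν : ν = μ.withDensity (fun x => ENNReal.ofReal (w x))) :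
    ∀ᵐ x ∂μ,
      Tendsto (fun n : ℕ =>
          poissonExt ν x (((2 : ℝ) ^ n)⁻¹) / poissonExt μ x (((2 : ℝ) ^ n)⁻¹))
        atTop (nhds (w x)) := by
  have hπ : (0:ℝ) < Real.pi := Real.pi_pos
  -- Lebesgue points
  have h1 : ∀ᵐ x ∂μ, Tendsto (fun r => ⨍ s in closedBall x r, |w s - w x| ∂μ)
      (𝓝[>] 0) (𝓝 0) := by
    filter_upwards [(Besicovitch.vitaliFamily μ).ae_tendsto_average_norm_sub
      hw_int.locallyIntegrable] with x hx
    have := hx.comp (Besicovitch.tendsto_filterAt μ x)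
    simpa [Function.comp_def, Real.norm_eq_abs] using this
  -- density of μ w.r.t. volume
  have h2 : ∀ᵐ x ∂μ, Tendsto (fun r => volume (closedBall x r) / μ (closedBall x r))
      (𝓝[>] 0) (𝓝 (volume.rnDeriv μ x)) := Besicovitch.ae_tendsto_rnDeriv volume μ
  have h3 : ∀ᵐ x ∂μ, volume.rnDeriv μ x < ⊤ := Measure.rnDeriv_lt_top volume μ
  filter_upwards [h1, h2, h3] with x hx1 hx2 hx3
  -- notation
  set L : ENNReal := volume.rnDeriv μ x with hL
  set M : ℝ := (L + 1).toReal with hM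
  have hL1top : L + 1 ≠ ⊤ := by
    simp [ENNReal.add_eq_top, hx3.ne]
  have hMpos : 0 < M := by
    rw [hM]
    refine ENNReal.toReal_pos ?_ hL1top
    simp
  -- ball mass lower bound
  have hballmass : ∃ rc > (0:ℝ), ∀ r ∈ Ioc (0:ℝ) rc,
      r / M ≤ (μ (closedBall x r)).toReal := by
    have hev : ∀ᶠ r in 𝓝[>] (0:ℝ),
        volume (closedBall x r) / μ (closedBall x r) < L + 1 :=
      hx2.eventually_lt_const (ENNReal.lt_add_right hx3.ne one_ne_zero)
    rcases mem_nhdsGT_iff_exists_Ioc_subset.1 hev with ⟨rc, hrc, hsub⟩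
    refine ⟨rc, hrc, fun r hr => ?_⟩
    have hlt := hsub hr
    simp only [mem_setOf_eq] at hlt
    have hrpos : 0 < r := hr.1
    have hμne : μ (closedBall x r) ≠ 0 := by
      intro h0
      rw [h0, ENNReal.div_zero] at hlt
      · exact (not_top_lt hlt)
      · rw [Real.volume_closedBall]
        simp only [ne_eq, ENNReal.ofReal_eq_zero, not_le]
        linarith
    have hvol : volume (closedBall x r) < (L + 1) * μ (closedBall x r) :=
      (ENNReal.div_lt_iff (Or.inl hμne) (Or.inl (measure_ne_top μ _))).1 hlt
    have h2r : ENNReal.ofReal (2 * r) ≤ (L + 1) * μ (closedBall x r) := by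
      rw [← Real.volume_closedBall x r]; exact hvol.le
    have := ENNReal.toReal_mono ?_ h2r
    · rw [ENNReal.toReal_ofReal (by linarith), ENNReal.toReal_mul] at this
      rw [div_le_iff₀ hMpos]
      calc r ≤ 2 * r := by linarith
        _ ≤ M * (μ (closedBall x r)).toReal := this
        _ = (μ (closedBall x r)).toReal * M := mul_comm _ _
    · exact ENNReal.mul_ne_top hL1top (measure_ne_top μ _)
  rcases hballmass with ⟨rc, hrcpos, hrc⟩
  -- the function g := |w - w x| and its integral C
  set g : ℝ → ℝ := fun s => |w s - w x| with hg
  have hgint : Integrable g μ := (hw_int.sub (integrable_const (w x))).abs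
  have hgnn : ∀ s, 0 ≤ g s := fun s => abs_nonneg _
  set C : ℝ := ∫ s, g s ∂μ with hC
  have hCnn : 0 ≤ C := integral_nonneg hgnn
  -- start the limit proof
  rw [Metric.tendsto_nhds]
  intro ε hε
  set δ : ℝ := ε / 4 with hδ
  have hδpos : 0 < δ := by positivity
  -- radius r₀ from the Lebesgue point property
  obtain ⟨r₀, hr₀pos, hr₀⟩ : ∃ r₀ > (0:ℝ), ∀ r ∈ Ioc (0:ℝ) r₀,
      ⨍ s in closedBall x r, g s ∂μ < δ := by
    have hev : ∀ᶠ r in 𝓝[>] (0:ℝ), ⨍ s in closedBall x r, g s ∂μ < δ :=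
      hx1.eventually_lt_const hδpos
    rcases mem_nhdsGT_iff_exists_Ioc_subset.1 hev with ⟨r₀, hr₀, hsub⟩
    exact ⟨r₀, hr₀, fun r hr => hsub hr⟩
  -- the H hypothesis for lemB
  have H : ∀ r ∈ Ioc (0:ℝ) r₀,
      ∫ s in closedBall x r, g s ∂μ ≤ δ * (μ (closedBall x r)).toReal := by
    intro r hr
    by_cases h0 : μ (closedBall x r) = 0
    · rw [Measure.restrict_eq_zero.2 h0]
      simp [mul_nonneg hδpos.le ENNReal.toReal_nonneg]
    · have havg := (hr₀ r hr).le
      rw [setAverage_eq, smul_eq_mul] at havg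
      have hmpos : 0 < (μ (closedBall x r)).toReal :=
        ENNReal.toReal_pos h0 (measure_ne_top μ _)
      calc ∫ s in closedBall x r, g s ∂μ
          = (μ (closedBall x r)).toReal *
            ((μ (closedBall x r)).toReal⁻¹ * ∫ s in closedBall x r, g s ∂μ) := by
            field_simp
        _ ≤ (μ (closedBall x r)).toReal * δ := by
            refine mul_le_mul_of_nonneg_left havg hmpos.le
        _ = δ * (μ (closedBall x r)).toReal := mul_comm _ _
  -- choose r₁
  set r₁ : ℝ := min r₀ (min rc (δ * r₀ ^ 2 / (C * M + 1))) with hr₁def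
  have hr₁pos : 0 < r₁ := by
    refine lt_min hr₀pos (lt_min hrcpos ?_)
    have : 0 < C * M + 1 := by positivity
    positivity
  have hr₁r₀ : r₁ ≤ r₀ := min_le_left _ _
  have hr₁rc : r₁ ≤ rc := le_trans (min_le_right _ _) (min_le_left _ _)
  have hr₁small : r₁ ≤ δ * r₀ ^ 2 / (C * M + 1) :=
    le_trans (min_le_right _ _) (min_le_right _ _)
  set m₁ : ℝ := (μ (closedBall x r₁)).toReal with hm₁def
  have hm₁ : r₁ / M ≤ m₁ := hrc r₁ ⟨hr₁pos, hr₁rc⟩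
  have hm₁pos : 0 < m₁ := lt_of_lt_of_le (by positivity) hm₁
  -- key inequality on r₁
  have hkey : C * M * r₁ ≤ δ * r₀ ^ 2 := by
    have h1 : 0 < C * M + 1 := by positivity
    rw [le_div_iff₀ h1] at hr₁small
    nlinarith [mul_nonneg hCnn hMpos.le, hr₁pos.le]
  clear_value L M r₁ m₁
  -- the per-n estimate
  have claim : ∀ n : ℕ, dist (poissonExt ν x (((2 : ℝ) ^ n)⁻¹) /
      poissonExt μ x (((2 : ℝ) ^ n)⁻¹)) (w x) ≤
      2 * δ + C / m₁ * ((((2 : ℝ) ^ n)⁻¹) ^ 2 / r₀ ^ 2) := by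
    intro n
    set y : ℝ := ((2 : ℝ) ^ n)⁻¹ with hydef
    have hy : 0 < y := by positivity
    set K : ℝ → ℝ := fun s => y / ((s - x) ^ 2 + y ^ 2) with hKdef
    set D : ℝ := ∫ s, K s ∂μ with hD
    have hDlow : m₁ * (y / (r₁ ^ 2 + y ^ 2)) ≤ D := by
      have := lowden μ x hy hr₁pos.le
      rw [← hm₁def] at this
      exact this
    have hDpos : 0 < D := lt_of_lt_of_le (by positivity) hDlow
    -- Poisson extensions
    have hpν : poissonExt ν x y = (1 / Real.pi) * ∫ s, w s * K s ∂μ := by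
      rw [hν, poissonExt, nuval μ w hw_int hw_nonneg x y]
    have hpμ : poissonExt μ x y = (1 / Real.pi) * D := rfl
    have hratio : poissonExt ν x y / poissonExt μ x y = (∫ s, w s * K s ∂μ) / D := by
      rw [hpν, hpμ, mul_comm (1 / Real.pi), mul_comm (1 / Real.pi),
        mul_div_mul_right _ _ (by positivity : (1:ℝ) / Real.pi ≠ 0)]
    -- integrability of w * K etc.
    have hKm : Measurable K := (contK x hy).measurable
    have hKint : Integrable K μ := integrableK μ x hy
    have hKbd : ∃ Cb, ∀ s, ‖K s‖ ≤ Cb := ⟨1 / y, fun s => by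
      rw [Real.norm_eq_abs, abs_of_pos (K_pos hy s)]; exact K_le hy s⟩
    have hwK : Integrable (fun s => w s * K s) μ :=
      (hw_int.bdd_mul hKm.aestronglyMeasurable (Eventually.of_forall hKbd.choose_spec)).congr
        (Eventually.of_forall fun s => mul_comm _ _)
    -- numerator estimate via lemB
    have hnum := lemB μ g hgint (Eventually.of_forall hgnn) x y r₀ δ hy hr₀pos
      hδpos.le H
    -- |∫ w K - w x * D| ≤ ∫ g K
    have hsub : ∫ s, (w s - w x) * K s ∂μ = (∫ s, w s * K s ∂μ) - w x * D := by
      have : ∫ s, (w s - w x) * K s ∂μ =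
          ∫ s, (w s * K s - w x * K s) ∂μ := by
        congr 1; ext s; ring
      rw [this, integral_sub hwK (hKint.const_mul (w x)), integral_const_mul, ← hD]
    have habs : |(∫ s, w s * K s ∂μ) - w x * D| ≤ ∫ s, g s * K s ∂μ := by
      rw [← hsub]
      have h5 : |∫ s, (w s - w x) * K s ∂μ| ≤ ∫ s, |w s - w x| * |K s| ∂μ := by
        simpa [Real.norm_eq_abs] using
          norm_integral_le_integral_norm (μ := μ) (f := fun s => (w s - w x) * K s)
      refine h5.trans (le_of_eq ?_)
      congr 1; ext s
      rw [abs_of_pos (K_pos hy s)]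
    -- denominator comparison for the tail term
    have htail : (y / (r₀ ^ 2 + y ^ 2)) * C / D ≤ C / m₁ * ((r₁ ^ 2 + y ^ 2) / (r₀ ^ 2 + y ^ 2)) := by
      have h₁ : (y / (r₀ ^ 2 + y ^ 2)) * C / D ≤
          (y / (r₀ ^ 2 + y ^ 2)) * C / (m₁ * (y / (r₁ ^ 2 + y ^ 2))) := by
        gcongr
        all_goals first
          | positivity
          | exact mul_nonneg (by positivity) hCnn
      refine le_trans h₁ (le_of_eq ?_)
      field_simp
    -- put it together
    rw [hratio, Real.dist_eq]
    have hstep : |(∫ s, w s * K s ∂μ) / D - w x| ≤ (∫ s, g s * K s ∂μ) / D := by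
      rw [div_sub' hDpos.ne', abs_div, abs_of_pos hDpos, mul_comm D (w x)]
      gcongr
      all_goals exact habs
    refine hstep.trans ?_
    have hq : (∫ s, g s * K s ∂μ) / D ≤ δ + (y / (r₀ ^ 2 + y ^ 2)) * C / D := by
      rw [div_le_iff₀ hDpos]
      calc ∫ s, g s * K s ∂μ ≤ δ * D + (y / (r₀ ^ 2 + y ^ 2)) * C := hnum
        _ = (δ + (y / (r₀ ^ 2 + y ^ 2)) * C / D) * D := by field_simp
    refine hq.trans ?_
    have hfinal : (y / (r₀ ^ 2 + y ^ 2)) * C / D ≤ δ + C / m₁ * (y ^ 2 / r₀ ^ 2) := by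
      refine htail.trans ?_
      have hsplit : C / m₁ * ((r₁ ^ 2 + y ^ 2) / (r₀ ^ 2 + y ^ 2)) ≤
          C / m₁ * (r₁ ^ 2 / r₀ ^ 2) + C / m₁ * (y ^ 2 / r₀ ^ 2) := by
        rw [← mul_add, ← add_div]
        refine mul_le_mul_of_nonneg_left ?_ (div_nonneg hCnn hm₁pos.le)
        gcongr
        all_goals nlinarith [sq_nonneg y, sq_nonneg r₁, sq_nonneg r₀, hr₀pos]
      refine hsplit.trans (add_le_add_left ?_ _)
      -- C/m₁ * r₁²/r₀² ≤ δ
      have hCm : C / m₁ * (r₁ ^ 2 / r₀ ^ 2) ≤ C * M * r₁ / r₀ ^ 2 := by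
        have h2 : r₁ ≤ m₁ * M := by
          rw [div_le_iff₀ hMpos] at hm₁; linarith
        have h3 := mul_le_mul_of_nonneg_left h2
          (mul_nonneg (mul_nonneg hCnn hr₁pos.le) (sq_nonneg r₀))
        rw [div_mul_div_comm, div_le_div_iff₀ (by positivity) (by positivity)]
        nlinarith [h3]
      refine hCm.trans ?_
      rw [div_le_iff₀ (by positivity : (0:ℝ) < r₀ ^ 2)]
      linarith [hkey]
    calc δ + (y / (r₀ ^ 2 + y ^ 2)) * C / D ≤ δ + (δ + C / m₁ * (y ^ 2 / r₀ ^ 2)) :=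
          add_le_add_right hfinal δ
      _ = 2 * δ + C / m₁ * (y ^ 2 / r₀ ^ 2) := by ring
  -- conclude via the limit of the error term
  have herr : Tendsto (fun n : ℕ => 2 * δ + C / m₁ * ((((2 : ℝ) ^ n)⁻¹) ^ 2 / r₀ ^ 2))
      atTop (𝓝 (2 * δ)) := by
    have hy0 : Tendsto (fun n : ℕ => ((2 : ℝ) ^ n)⁻¹) atTop (𝓝 0) := by
      have : (fun n : ℕ => ((2 : ℝ) ^ n)⁻¹) = fun n : ℕ => ((2 : ℝ)⁻¹) ^ n := by
        ext n; rw [inv_pow]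
      rw [this]
      exact tendsto_pow_atTop_nhds_zero_of_lt_one (by norm_num) (by norm_num)
    have : Tendsto (fun n : ℕ => C / m₁ * ((((2 : ℝ) ^ n)⁻¹) ^ 2 / r₀ ^ 2)) atTop (𝓝 0) := by
      have h2 : Tendsto (fun n : ℕ => (((2 : ℝ) ^ n)⁻¹) ^ 2) atTop (𝓝 0) := by
        simpa using hy0.pow 2
      have := (h2.div_const (r₀ ^ 2)).const_mul (C / m₁)
      simpa using this
    simpa using (tendsto_const_nhds.add this)
  have hev : ∀ᶠ n : ℕ in atTop,
      2 * δ + C / m₁ * ((((2 : ℝ) ^ n)⁻¹) ^ 2 / r₀ ^ 2) < 3 * δ :=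
    herr.eventually_lt_const (by linarith)
  filter_upwards [hev] with n hn
  calc dist _ (w x) ≤ 2 * δ + C / m₁ * ((((2 : ℝ) ^ n)⁻¹) ^ 2 / r₀ ^ 2) := claim n
    _ < 3 * δ := hn
    _ < ε := by rw [hδ]; linarith
end
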